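/- If l is odd and n is a positive natural number with n ≡ 0 (mod 6), then the generalized quaternion algebra H_ℚ(−1, b_{n+1}·b_{n−1}) is a division algebra; equivalently, every nonzero element of H_ℚ(−1, b_{n+1}·b_{n−1}) is a unit. -/

import Mathlib

/-- The sequence `a` defined by `a 0 = 0`, `a 1 = 1`, `a (n+2) = l * a (n+1) + a n`. -/
def a (l : ℕ) : ℕ → ℤ
  | 0 => 0
  | 1 => 1
  | n + 2 => l * a l (n + 1) + a l n

/-- The sequence `b` defined by `b 0 = 2`, `b 1 = l`, `b (n+2) = l * b (n+1) + b n`. -/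
def b (l : ℕ) : ℕ → ℤ
  | 0 => 2
  | 1 => (l : ℤ)
  | n + 2 => l * b l (n + 1) + b l n

lemma b_even (l : ℕ) (hlo : Odd l) : ∀ k, 2 ∣ b l (3 * k) := by
  have hl2 : (2:ℤ) ∣ (l:ℤ)^2 + 1 := by
    obtain ⟨t, ht⟩ := hlo
    exact ⟨2*t^2 + 2*t + 1, by push_cast [ht]; ring⟩
  intro k
  induction k with
  | zero => simp [b]
  | succ k ih =>
    rw [show 3 * (k + 1) = (3 * k + 1) + 2 by ring]
    have h : b l (3*k+1+2) = ((l:ℤ)^2+1) * b l (3*k+1) + l * b l (3*k) := by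
      rw [show b l (3*k+1+2) = (l:ℤ) * b l (3*k+1+1) + b l (3*k+1) from rfl,
          show b l (3*k+1+1) = (l:ℤ) * b l (3*k+1) + b l (3*k) from rfl]
      ring
    rw [h]
    exact dvd_add (hl2.mul_right _) (ih.mul_left _)

lemma b_identity (l : ℕ) : ∀ n, b l (n+2) * b l n - b l (n+1)^2 = (-1)^n * ((l:ℤ)^2+4) := by
  intro n
  induction n with
  | zero => simp [b]; ring
  | succ n ih =>
    rw [show b l (n+1+2) = (l:ℤ) * b l (n+2) + b l (n+1) from rfl,
        show b l (n+2) = (l:ℤ) * b l (n+1) + b l n from rfl] at *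
    linear_combination (-1:ℤ) * ih

lemma zmod4_aux : ∀ p q r : ZMod 4, p^2 + q^2 = 3 * r^2 →
    (p = 0 ∨ p = 2) ∧ (q = 0 ∨ q = 2) ∧ (r = 0 ∨ r = 2) := by decide

lemma even_of_zmod4 (p : ℤ) (h : (p : ZMod 4) = 0 ∨ (p : ZMod 4) = 2) : 2 ∣ p := by
  have h2 : (ZMod.castHom (show (2:ℕ) ∣ 4 by norm_num) (ZMod 2)) ((p : ZMod 4)) = (p : ZMod 2) :=
    map_intCast _ p
  have : (p : ZMod 2) = 0 := by
    rcases h with h | h <;> rw [← h2, h] <;> decide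
  exact (ZMod.intCast_zmod_eq_zero_iff_dvd p 2).mp this

lemma descent (β : ℤ) (hβ : β % 4 = 3) :
    ∀ m : ℕ, ∀ r p q : ℤ, r.natAbs = m → p^2 + q^2 = β * r^2 → r = 0 := by
  have hβ4 : (β : ZMod 4) = 3 := by
    have : (β : ZMod 4) = ((3:ℤ) : ZMod 4) :=
      (ZMod.intCast_eq_intCast_iff' _ _ _).mpr (by omega)
    simpa using this
  intro m
  induction m using Nat.strong_induction_on with
  | _ m ih =>
    intro r p q hm heq
    by_contra hr
    have hc : ((p:ZMod 4))^2 + ((q:ZMod 4))^2 = 3 * ((r:ZMod 4))^2 := by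
      have := congrArg (Int.cast : ℤ → ZMod 4) heq
      push_cast at this
      rw [hβ4] at this
      exact this
    obtain ⟨hp, hq, hrr⟩ := zmod4_aux _ _ _ hc
    obtain ⟨p', rfl⟩ := even_of_zmod4 p hp
    obtain ⟨q', rfl⟩ := even_of_zmod4 q hq
    obtain ⟨r', rfl⟩ := even_of_zmod4 r hrr
    have heq' : p'^2 + q'^2 = β * r'^2 := by linarith [heq]
    have hlt : r'.natAbs < m := by
      rw [← hm]
      have : r' ≠ 0 := by rintro rfl; exact hr (by ring)
      omega
    have := ih _ hlt r' p' q' rfl heq'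
    exact hr (by rw [this]; ring)

lemma rat_num_eq (q : ℚ) : (q.num : ℚ) = q * (q.den : ℚ) := by
  have hden : ((q.den : ℚ)) ≠ 0 := by exact_mod_cast q.den_ne_zero
  exact (div_eq_iff hden).mp (Rat.num_div_den q)

lemma rat_descent (B : ℤ) (hB4 : B % 4 = 3) (q1 q2 q3 q4 : ℚ)
    (heq : q1^2 + q2^2 = (B:ℚ) * (q3^2 + q4^2)) :
    q1 = 0 ∧ q2 = 0 ∧ q3 = 0 ∧ q4 = 0 := by
  have hd1' : (q1.den:ℤ) ≠ 0 := by exact_mod_cast q1.den_ne_zero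
  have hd2' : (q2.den:ℤ) ≠ 0 := by exact_mod_cast q2.den_ne_zero
  have hd3' : (q3.den:ℤ) ≠ 0 := by exact_mod_cast q3.den_ne_zero
  have hd4' : (q4.den:ℤ) ≠ 0 := by exact_mod_cast q4.den_ne_zero
  have hint : (q1.num * ((q2.den:ℤ) * q3.den * q4.den))^2
      + (q2.num * ((q1.den:ℤ) * q3.den * q4.den))^2
      = B * ((q3.num * ((q1.den:ℤ) * q2.den * q4.den))^2
      + (q4.num * ((q1.den:ℤ) * q2.den * q3.den))^2) := by
    have h : ((q1.num * ((q2.den:ℤ) * q3.den * q4.den) : ℤ) : ℚ)^2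
        + ((q2.num * ((q1.den:ℤ) * q3.den * q4.den) : ℤ) : ℚ)^2
        = (B:ℚ) * (((q3.num * ((q1.den:ℤ) * q2.den * q4.den) : ℤ) : ℚ)^2
        + ((q4.num * ((q1.den:ℤ) * q2.den * q3.den) : ℤ) : ℚ)^2) := by
      push_cast [rat_num_eq q1, rat_num_eq q2, rat_num_eq q3, rat_num_eq q4]
      linear_combination ((q1.den:ℚ) * q2.den * q3.den * q4.den)^2 * heq
    exact_mod_cast h
  set p1 := q1.num * ((q2.den:ℤ) * q3.den * q4.den)
  set p2 := q2.num * ((q1.den:ℤ) * q3.den * q4.den)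
  set p3 := q3.num * ((q1.den:ℤ) * q2.den * q4.den)
  set p4 := q4.num * ((q1.den:ℤ) * q2.den * q3.den)
  have key : (p1*p3 + p2*p4)^2 + (p1*p4 - p2*p3)^2 = B * (p3^2 + p4^2)^2 := by
    linear_combination (p3^2 + p4^2) * hint
  have hr0 : p3^2 + p4^2 = 0 := descent B hB4 _ _ _ _ rfl key
  have hp30 : p3 = 0 := by nlinarith [sq_nonneg p3, sq_nonneg p4]
  have hp40 : p4 = 0 := by nlinarith [sq_nonneg p3, sq_nonneg p4]
  have h12 : p1^2 + p2^2 = 0 := by rw [hint, hr0]; ring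
  have hp10 : p1 = 0 := by nlinarith [sq_nonneg p1, sq_nonneg p2]
  have hp20 : p2 = 0 := by nlinarith [sq_nonneg p1, sq_nonneg p2]
  refine ⟨?_, ?_, ?_, ?_⟩ <;>
    [ (have : q1.num = 0 := by
        rcases mul_eq_zero.mp hp10 with h | h
        · exact h
        · simp [mul_eq_zero, hd1', hd2', hd3', hd4'] at h);
      (have : q2.num = 0 := by
        rcases mul_eq_zero.mp hp20 with h | h
        · exact h
        · simp [mul_eq_zero, hd1', hd2', hd3', hd4'] at h);
      (have : q3.num = 0 := by
        rcases mul_eq_zero.mp hp30 with h | h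
        · exact h
        · simp [mul_eq_zero, hd1', hd2', hd3', hd4'] at h);
      (have : q4.num = 0 := by
        rcases mul_eq_zero.mp hp40 with h | h
        · exact h
        · simp [mul_eq_zero, hd1', hd2', hd3', hd4'] at h)] <;>
    exact Rat.num_eq_zero.mp this

open Quaternion in
/-- If `l` is odd and `6 ∣ n`, the quaternion algebra `H_ℚ(-1, b_{n+1}·b_{n-1})`
is a division algebra. -/
theorem quat_alg_division_bb (l : ℕ) (hl : 0 < l) (hlo : Odd l) (n : ℕ)
    (hn : 0 < n) (h6 : n % 6 = 0) :
    ∀ x : ℍ[ℚ, -1, ((b l (n + 1) * b l (n - 1) : ℤ) : ℚ)], x ≠ 0 → IsUnit x := by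
  obtain ⟨k, hk⟩ : ∃ k, n = 6 * k := ⟨n / 6, by omega⟩
  have hk1 : 1 ≤ k := by omega
  have hid := b_identity l (n - 1)
  rw [show n - 1 + 2 = n + 1 by omega, show n - 1 + 1 = n by omega] at hid
  have hneg : (-1 : ℤ)^(n-1) = -1 := Odd.neg_one_pow ⟨3*k - 1, by omega⟩
  have h2b : 2 ∣ b l n := by
    rw [show n = 3 * (2 * k) by omega]; exact b_even l hlo (2 * k)
  have h4sq : (4:ℤ) ∣ b l n ^ 2 := by
    obtain ⟨s, hs⟩ := h2b
    exact ⟨s^2, by rw [hs]; ring⟩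
  have hl41 : ((l:ℤ)^2 + 4) % 4 = 1 := by
    obtain ⟨t, ht⟩ := hlo
    have : ((l:ℤ)^2 + 4) = 4 * ((t:ℤ)^2 + t + 1) + 1 := by push_cast [ht]; ring
    omega
  have hBeq : b l (n + 1) * b l (n - 1) = b l n ^ 2 - ((l:ℤ)^2 + 4) := by
    rw [hneg] at hid; linarith
  have hB4 : (b l (n + 1) * b l (n - 1)) % 4 = 3 := by omega
  intro x hx
  have hre : (x * star x).re
      = x.re^2 + x.imI^2 - ((b l (n + 1) * b l (n - 1) : ℤ):ℚ) * x.imJ^2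
        - ((b l (n + 1) * b l (n - 1) : ℤ):ℚ) * x.imK^2 := by
    simp [QuaternionAlgebra.re_mul]
    ring
  have hN : (x * star x).re ≠ 0 := by
    intro hN0
    rw [hN0] at hre
    have heq : x.re^2 + x.imI^2
        = ((b l (n + 1) * b l (n - 1) : ℤ):ℚ) * (x.imJ^2 + x.imK^2) := by linarith
    obtain ⟨h1, h2, h3, h4⟩ := rat_descent _ hB4 _ _ _ _ heq
    exact hx (by ext <;> simp [h1, h2, h3, h4])
  set N : ℚ := (x * star x).re with hNdef
  refine ⟨⟨x, N⁻¹ • star x, ?_, ?_⟩, rfl⟩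
  · rw [mul_smul_comm, QuaternionAlgebra.mul_star_eq_coe, ← hNdef,
      QuaternionAlgebra.smul_coe, inv_mul_cancel₀ hN, QuaternionAlgebra.coe_one]
  · rw [smul_mul_assoc, star_comm_self',
      QuaternionAlgebra.mul_star_eq_coe, ← hNdef,
      QuaternionAlgebra.smul_coe, inv_mul_cancel₀ hN, QuaternionAlgebra.coe_one]
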